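/- arXiv:0802.0789 — 3 statements merged into one kernel-verified Lean document; each statement's English description precedes it below -/
import Mathlib

section
/- Let b : ℂ₊ → ℂ be analytic with |b| ≤ 1, let z₀ ∈ ℂ₊, and set a_j = b^{(j)}(z₀)/j!. For ℓ ≥ 1 define k_{z₀}^b(z) = (1 − conj(b(z₀))·b(z))/(z − conj(z₀)) and k_{z₀,ℓ}^b(z) = (1 − b(z)·Σ_{j=0}^ℓ conj(a_j)(z − conj(z₀))^j)/(z − conj(z₀))^{ℓ+1}. Then for all z ∈ ℂ₊ with z ≠ conj(z₀): (k_{z₀}^b(z))^{ℓ+1} = (1 − conj(b(z₀))·b(z))^ℓ · k_{z₀,ℓ}^b(z) + b(z) · Σ_{j=1}^ℓ conj(a_j) · (1 − conj(b(z₀))·b(z))^{j−1} · (k_{z₀}^b(z))^{ℓ+1−j}. -/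
open Complex Finset

/-- the recurrence relation between `(k_{z₀}^b)^{ℓ+1}` and the kernels
`k_{z₀,ℓ}^b`. -/
theorem stmt_8 (b : ℂ → ℂ)
    (hb_an : DifferentiableOn ℂ b {w : ℂ | 0 < w.im})
    (hb_bdd : ∀ w : ℂ, 0 < w.im → ‖b w‖ ≤ 1)
    (z₀ : ℂ) (hz₀ : 0 < z₀.im)
    (a : ℕ → ℂ) (ha : ∀ j, a j = iteratedDeriv j b z₀ / (j.factorial : ℂ))
    (ℓ : ℕ) (hℓ : 1 ≤ ℓ)
    (z : ℂ) (hz : 0 < z.im) (hzz₀ : z ≠ (starRingEnd ℂ) z₀) :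
    ((1 - (starRingEnd ℂ) (b z₀) * b z) / (z - (starRingEnd ℂ) z₀))^(ℓ+1) =
      (1 - (starRingEnd ℂ) (b z₀) * b z)^ℓ *
        ((1 - b z * ∑ j ∈ range (ℓ+1), (starRingEnd ℂ) (a j) * (z - (starRingEnd ℂ) z₀)^j) /
          (z - (starRingEnd ℂ) z₀)^(ℓ+1)) +
      b z * ∑ j ∈ Icc 1 ℓ, (starRingEnd ℂ) (a j) *
        (1 - (starRingEnd ℂ) (b z₀) * b z)^(j-1) *
        ((1 - (starRingEnd ℂ) (b z₀) * b z) / (z - (starRingEnd ℂ) z₀))^(ℓ+1-j) := by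
  have ha0 : a 0 = b z₀ := by simp [ha]
  have hD : z - (starRingEnd ℂ) z₀ ≠ 0 := sub_ne_zero.mpr hzz₀
  set A : ℂ := 1 - (starRingEnd ℂ) (b z₀) * b z with hA
  set D : ℂ := z - (starRingEnd ℂ) z₀ with hDdef
  set c : ℕ → ℂ := fun j => (starRingEnd ℂ) (a j) with hc
  have key : ∀ j ∈ Icc 1 ℓ, c j * A^(j-1) * (A/D)^(ℓ+1-j)
      = (c j * D^j) * A^ℓ / D^(ℓ+1) := by
    intro j hj
    simp only [mem_Icc] at hj
    have e1 : (j-1)+(ℓ+1-j) = ℓ := by omega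
    have e2 : j + (ℓ+1-j) = ℓ+1 := by omega
    have f1 : A^ℓ = A^(j-1) * A^(ℓ+1-j) := by rw [← pow_add, e1]
    have f2 : D^(ℓ+1) = D^j * D^(ℓ+1-j) := by rw [← pow_add, e2]
    rw [div_pow, ← mul_div_assoc, f1, f2,
      div_eq_div_iff (pow_ne_zero _ hD) (mul_ne_zero (pow_ne_zero _ hD) (pow_ne_zero _ hD))]
    ring
  rw [Finset.sum_congr rfl key]
  rw [← Finset.sum_div, ← Finset.sum_mul]
  have hsplit : ∑ j ∈ range (ℓ+1), c j * D^j
      = c 0 + ∑ j ∈ Icc 1 ℓ, c j * D^j := by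
    rw [Finset.sum_range_succ', ← Finset.Ico_add_one_right_eq_Icc, Finset.sum_Ico_eq_sum_range]
    simp [add_comm]
  have hc0 : c 0 = (starRingEnd ℂ) (b z₀) := by simp [hc, ha0]
  rw [hsplit, hc0]
  rw [div_pow]
  field_simp
  rw [hA]
  ring
end

section
/- Let b be an outer function in the unit ball of H^∞(ℂ₊), let x ∈ ℝ with d₀ := dist(x, σ(b)) > 0 (so |b(t)| = 1 for a.e. t with |t − x| < d₀), and let 0 < y < d₀. Define |b'(x)| := (1/π) ∫_ℝ |log|b(t)||/|t − x|² dt. Then |b(x + iy)| ≤ exp(−y·|b'(x)|/4). -/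
open MeasureTheory Real

/-- for an outer function `b` with boundary log-modulus `L` vanishing near `x`
(distance `d₀` to the spectrum), one has `|b(x+iy)| ≤ exp(-y|b'(x)|/4)` for `0 < y < d₀`,
where `|b'(x)| = (1/π) ∫ |L t|/|t-x|² dt`. -/
theorem stmt_14 (b : ℂ → ℂ) (L : ℝ → ℝ)
    (hL_nonpos : ∀ᵐ t : ℝ, L t ≤ 0)
    (x d₀ : ℝ) (hd₀ : 0 < d₀)
    (hL_vanish : ∀ᵐ t : ℝ, |t - x| < d₀ → L t = 0)
    (houter : ∀ z : ℂ, 0 < z.im → Real.log ‖b z‖ =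
      (z.im / π) * ∫ t : ℝ, L t / ‖(t : ℂ) - z‖^2)
    (hL_int : Integrable (fun t : ℝ => |L t| / (t - x)^2))
    (y : ℝ) (hy0 : 0 < y) (hyd : y < d₀) :
    ‖b ((x : ℂ) + (y : ℂ) * Complex.I)‖ ≤
      Real.exp (-(y * ((1 / π) * ∫ t : ℝ, |L t| / (t - x)^2)) / 4) := by
  have hπ : (0:ℝ) < π := Real.pi_pos
  set z : ℂ := (x:ℂ) + (y:ℂ) * Complex.I with hz
  have hzim : z.im = y := by simp [hz]
  have hD : ∀ t : ℝ, ‖(t : ℂ) - z‖^2 = (t-x)^2 + y^2 := by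
    intro t
    rw [Complex.sq_norm, Complex.normSq_apply]
    simp [hz]
    ring
  have hDpos : ∀ t : ℝ, 0 < (t-x)^2 + y^2 := fun t => by positivity
  set A : ℝ := ∫ t : ℝ, |L t| / (t - x)^2 with hA_def
  have hA : (0:ℝ) ≤ A := integral_nonneg fun t => by positivity
  -- pointwise a.e. inequality
  have hkey : ∀ᵐ t : ℝ, L t / ((t-x)^2 + y^2) ≤ -(1/2) * (|L t| / (t-x)^2) := by
    filter_upwards [hL_nonpos, hL_vanish] with t h1 h2
    by_cases hcase : |t - x| < d₀
    · simp [h2 hcase]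
    · push_neg at hcase
      have habs : L t = -|L t| := by rw [abs_of_nonpos h1]; ring
      have hy2 : y ^ 2 ≤ (t-x)^2 := by
        have h' : y ≤ |t - x| := le_of_lt (lt_of_lt_of_le hyd hcase)
        nlinarith [abs_nonneg (t-x), sq_abs (t-x)]
      have h0 : 0 < (t-x)^2 := by
        have := lt_of_lt_of_le hd₀ hcase
        nlinarith [sq_abs (t-x), abs_nonneg (t-x)]
      have hle : (t-x)^2 + y^2 ≤ 2 * (t-x)^2 := by linarith
      have hdiv : |L t| / (2 * (t-x)^2) ≤ |L t| / ((t-x)^2 + y^2) := by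
        gcongr
      have heq : -(1/2) * (|L t| / (t-x)^2) = -(|L t| / (2 * (t-x)^2)) := by
        rw [neg_mul, div_mul_div_comm, one_mul]
      have hLD : L t / ((t-x)^2 + y^2) = -(|L t| / ((t-x)^2 + y^2)) := by
        conv_lhs => rw [habs]
        exact neg_div _ _
      rw [hLD]
      linarith
  -- measurability of the integrand
  have hmeas : AEStronglyMeasurable (fun t : ℝ => L t / ((t-x)^2 + y^2)) volume := by
    have h1 := hL_int.aestronglyMeasurable
    have hc : Continuous (fun t : ℝ => (t-x)^2 / ((t-x)^2 + y^2)) := by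
      apply Continuous.div (by continuity) (by continuity)
      intro t; exact (hDpos t).ne'
    have h2 : AEStronglyMeasurable
        (fun t : ℝ => -((|L t| / (t-x)^2) * ((t-x)^2 / ((t-x)^2 + y^2)))) volume :=
      (h1.mul hc.aestronglyMeasurable).neg
    apply h2.congr
    filter_upwards [hL_nonpos, hL_vanish] with t h1' h2'
    by_cases hcase : |t - x| < d₀
    · simp [h2' hcase]
    · push_neg at hcase
      have htx : t - x ≠ 0 := by
        intro h
        rw [h] at hcase
        simp at hcase
        linarith
      have habs : L t = -|L t| := by rw [abs_of_nonpos h1']; ring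
      rw [habs]
      have hDn : (t-x)^2 + y^2 ≠ 0 := (hDpos t).ne'
      field_simp
      simp
  -- integrability
  have hbound : ∀ᵐ t : ℝ, ‖L t / ((t-x)^2 + y^2)‖ ≤ |L t| / (t - x)^2 := by
    filter_upwards [hL_vanish] with t hv
    by_cases hcase : |t - x| < d₀
    · simp [hv hcase]
    · push_neg at hcase
      have h0 : 0 < (t-x)^2 := by
        have := lt_of_lt_of_le hd₀ hcase
        nlinarith [sq_abs (t-x), abs_nonneg (t-x)]
      rw [Real.norm_eq_abs, abs_div, abs_of_pos (hDpos t)]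
      gcongr
      linarith [sq_nonneg y]
  have hf : Integrable (fun t : ℝ => L t / ((t-x)^2 + y^2)) :=
    hL_int.mono' hmeas hbound
  have hg : Integrable (fun t : ℝ => -(1/2) * (|L t| / (t - x)^2)) :=
    hL_int.const_mul _
  have hI : (∫ t : ℝ, L t / ((t-x)^2 + y^2)) ≤ -(1/2) * A := by
    have := integral_mono_ae hf hg hkey
    rwa [MeasureTheory.integral_const_mul] at this
  -- main estimate on the log
  have hlog := houter z (by rw [hzim]; exact hy0)
  have hlog' : Real.log ‖b z‖ ≤ (y / π) * (-(1/2) * A) := by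
    rw [hlog, hzim]
    have hint_eq : (∫ t : ℝ, L t / ‖(t : ℂ) - z‖^2)
        = ∫ t : ℝ, L t / ((t-x)^2 + y^2) := by
      congr 1; funext t; rw [hD t]
    rw [hint_eq]
    exact mul_le_mul_of_nonneg_left hI (div_nonneg hy0.le hπ.le)
  have hfin : Real.log ‖b z‖ ≤ -(y * ((1 / π) * A)) / 4 := by
    have heq : (y / π) * (-(1/2) * A) = -(y * ((1 / π) * A)) / 2 := by ring
    have hc : 0 ≤ y * ((1 / π) * A) := by positivity
    rw [heq] at hlog'
    linarith
  by_cases h0 : ‖b z‖ = 0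
  · rw [h0]; exact (Real.exp_pos _).le
  · have hpos : 0 < ‖b z‖ :=
      lt_of_le_of_ne (norm_nonneg _) (Ne.symm h0)
    exact (Real.log_le_iff_le_exp hpos).mp hfin
end

section
/- Let (λ_n) be a sequence in the upper half-plane satisfying the Carleson condition inf_k ∏_{n ≠ k} |(λ_n − λ_k)/(λ_n − conj(λ_k))| > 0. Then the measure ν = Σ_n Im(λ_n)·δ_{λ_n} is a Carleson measure: there is C > 0 with Σ_{λ_n ∈ S(x,h)} Im(λ_n) ≤ C·h for every square S(x,h) = [x, x+h] × [0, h], x ∈ ℝ, h > 0. -/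
open MeasureTheory Finset

namespace Stmt19Aux

/-- A `[0,1]`-valued sequence has product equal to the infimum of its finite subproducts. -/
lemma hasProd_iInf {f : ℕ → ℝ} (h0 : ∀ n, 0 ≤ f n) (h1 : ∀ n, f n ≤ 1) :
    HasProd f (⨅ s : Finset ℕ, ∏ n ∈ s, f n) := by
  apply tendsto_atTop_ciInf
  · intro s t hst
    show ∏ n ∈ t, f n ≤ ∏ n ∈ s, f n
    rw [← Finset.prod_sdiff hst]
    have h1' : ∏ n ∈ t \ s, f n ≤ 1 :=
      Finset.prod_le_one (fun n _ => h0 n) (fun n _ => h1 n)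
    have h2' : 0 ≤ ∏ n ∈ s, f n := Finset.prod_nonneg fun n _ => h0 n
    nlinarith
  · exact ⟨0, by rintro _ ⟨s, rfl⟩; exact Finset.prod_nonneg fun n _ => h0 n⟩

lemma tprod_le_prod {f : ℕ → ℝ} (h0 : ∀ n, 0 ≤ f n) (h1 : ∀ n, f n ≤ 1) (T : Finset ℕ) :
    ∏' n, f n ≤ ∏ n ∈ T, f n := by
  rw [(hasProd_iInf h0 h1).tprod_eq]
  exact ciInf_le ⟨0, by rintro _ ⟨s, rfl⟩; exact Finset.prod_nonneg fun n _ => h0 n⟩ T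

lemma one_sub_sq_le_neg_two_log {t : ℝ} (ht : 0 < t) : 1 - t ^ 2 ≤ -(2 * Real.log t) := by
  have h := Real.log_le_sub_one_of_pos ht
  nlinarith [sq_nonneg (t - 1)]

/-- Core estimate: if a finite product of `[0,1]`-valued terms is at least `δ > 0`,
then the sum of `1 - gₙ²` is at most `-2 log δ`. -/
lemma sum_one_sub_sq_le {g : ℕ → ℝ} {T : Finset ℕ} {δ : ℝ} (hδ : 0 < δ)
    (h0 : ∀ n ∈ T, 0 ≤ g n) (hp : δ ≤ ∏ n ∈ T, g n) :
    ∑ n ∈ T, (1 - g n ^ 2) ≤ -(2 * Real.log δ) := by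
  have hpos : ∀ n ∈ T, 0 < g n := by
    intro n hn
    rcases lt_or_eq_of_le (h0 n hn) with h | h
    · exact h
    · exfalso
      have : ∏ m ∈ T, g m = 0 := Finset.prod_eq_zero hn h.symm
      linarith [hp, this]
  have h1' : ∑ n ∈ T, (1 - g n ^ 2) ≤ ∑ n ∈ T, -(2 * Real.log (g n)) :=
    Finset.sum_le_sum fun n hn => one_sub_sq_le_neg_two_log (hpos n hn)
  have h2' : ∑ n ∈ T, -(2 * Real.log (g n)) = -(2 * Real.log (∏ n ∈ T, g n)) := by
    rw [Real.log_prod (fun n hn => (hpos n hn).ne')]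
    rw [Finset.mul_sum, ← Finset.sum_neg_distrib]
  have h3' : Real.log δ ≤ Real.log (∏ n ∈ T, g n) := Real.log_le_log hδ hp
  linarith

lemma nsq_pos (z w : ℂ) (hz : 0 < z.im) (hw : 0 < w.im) :
    0 < Complex.normSq (z - (starRingEnd ℂ) w) := by
  apply Complex.normSq_pos.2
  intro h0
  have him : (z - (starRingEnd ℂ) w).im = z.im + w.im := by
    simp [Complex.sub_im, Complex.conj_im]
  rw [h0] at him
  simp at him
  linarith

lemma key_ident (z w : ℂ) (hz : 0 < z.im) (hw : 0 < w.im) :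
    1 - (‖(z - w) / (z - (starRingEnd ℂ) w)‖) ^ 2 =
      4 * z.im * w.im / Complex.normSq (z - (starRingEnd ℂ) w) := by
  have hd := nsq_pos z w hz hw
  rw [norm_div, div_pow, Complex.sq_norm, Complex.sq_norm]
  rw [eq_div_iff hd.ne', sub_mul, one_mul, div_mul_cancel₀ _ hd.ne']
  simp only [Complex.normSq_apply, Complex.sub_re, Complex.sub_im, Complex.conj_re,
    Complex.conj_im]
  ring

lemma babs_le_one (z w : ℂ) (hz : 0 < z.im) (hw : 0 < w.im) :
    ‖(z - w) / (z - (starRingEnd ℂ) w)‖ ≤ 1 := by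
  have h1 := key_ident z w hz hw
  have h2 : 0 ≤ 4 * z.im * w.im / Complex.normSq (z - (starRingEnd ℂ) w) :=
    div_nonneg (by nlinarith) (nsq_pos z w hz hw).le
  nlinarith [norm_nonneg ((z - w) / (z - (starRingEnd ℂ) w))]

end Stmt19Aux

open Stmt19Aux

set_option maxHeartbeats 4000000 in
/-- a Carleson (separated) sequence in the upper half-plane induces a
Carleson measure `ν = Σ Im(λ_n) δ_{λ_n}`. -/
theorem stmt_19 (lam : ℕ → ℂ) (h_up : ∀ n, 0 < (lam n).im)
    (h_carleson : 0 < ⨅ k : ℕ, ∏' n : ℕ,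
      (if n = k then 1 else
        ‖(lam n - lam k) / (lam n - (starRingEnd ℂ) (lam k))‖)) :
    ∃ C : ℝ, 0 < C ∧ ∀ x h : ℝ, 0 < h →
      (∑' n : ℕ,
          (if (lam n).re ∈ Set.Icc x (x + h) ∧ (lam n).im ∈ Set.Icc 0 h
            then ENNReal.ofReal ((lam n).im) else 0)) ≤ ENNReal.ofReal (C * h) := by
  classical
  set b : ℕ → ℕ → ℝ :=
    fun n k => ‖(lam n - lam k) / (lam n - (starRingEnd ℂ) (lam k))‖ with hb
  set f : ℕ → ℕ → ℝ := fun k n => if n = k then 1 else b n k with hf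
  set δ : ℝ := ⨅ k : ℕ, ∏' n : ℕ, f k n with hδdef
  have hδ : 0 < δ := h_carleson
  have hnsq_pos : ∀ n k, 0 < Complex.normSq (lam n - (starRingEnd ℂ) (lam k)) :=
    fun n k => nsq_pos (lam n) (lam k) (h_up n) (h_up k)
  have hident : ∀ n k, 1 - b n k ^ 2 =
      4 * (lam n).im * (lam k).im / Complex.normSq (lam n - (starRingEnd ℂ) (lam k)) :=
    fun n k => key_ident (lam n) (lam k) (h_up n) (h_up k)
  have hb_nonneg : ∀ n k, 0 ≤ b n k :=
    fun n k => norm_nonneg _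
  have hb_le_one : ∀ n k, b n k ≤ 1 :=
    fun n k => babs_le_one (lam n) (lam k) (h_up n) (h_up k)
  have hf0 : ∀ k n, 0 ≤ f k n := by
    intro k n
    show (0:ℝ) ≤ if n = k then 1 else b n k
    split_ifs
    · norm_num
    · exact hb_nonneg n k
  have hf1 : ∀ k n, f k n ≤ 1 := by
    intro k n
    show (if n = k then (1:ℝ) else b n k) ≤ 1
    split_ifs
    · norm_num
    · exact hb_le_one n k
  have hbdd : BddBelow (Set.range fun k => ∏' n, f k n) := by
    refine ⟨0, ?_⟩
    rintro _ ⟨k, rfl⟩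
    show (0:ℝ) ≤ ∏' n, f k n
    rw [(hasProd_iInf (hf0 k) (hf1 k)).tprod_eq]
    exact le_ciInf fun s => Finset.prod_nonneg fun n _ => hf0 k n
  have hprodT : ∀ (k : ℕ) (T : Finset ℕ), δ ≤ ∏ n ∈ T, f k n := by
    intro k T
    exact le_trans (ciInf_le hbdd k) (tprod_le_prod (hf0 k) (hf1 k) T)
  have hδ1 : δ ≤ 1 := by simpa using hprodT 0 ∅
  set L : ℝ := -Real.log δ with hLdef
  clear_value L
  have hL : 0 ≤ L := by
    rw [hLdef, neg_nonneg]
    exact Real.log_nonpos hδ.le hδ1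
  -- Lemma A
  have lemA : ∀ (k : ℕ) (T : Finset ℕ), k ∉ T →
      ∑ n ∈ T, (1 - b n k ^ 2) ≤ 2 * L := by
    intro k T hk
    have heq : ∑ n ∈ T, (1 - b n k ^ 2) = ∑ n ∈ T, (1 - f k n ^ 2) := by
      apply Finset.sum_congr rfl
      intro n hn
      have : f k n = b n k := if_neg (by rintro rfl; exact hk hn)
      rw [this]
    rw [heq, hLdef]
    have := sum_one_sub_sq_le hδ (fun n _ => hf0 k n) (hprodT k T)
    linarith
  -- Lemma B
  have lemB : ∀ (k : ℕ) (T : Finset ℕ), k ∉ T → ∀ K : ℝ, 0 < K →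
      (∀ n ∈ T, Complex.normSq (lam n - (starRingEnd ℂ) (lam k)) ≤ K * (lam k).im ^ 2) →
      ∑ n ∈ T, (lam n).im ≤ K * L * (lam k).im / 2 := by
    intro k T hk K hK hT
    have hyk : 0 < (lam k).im := h_up k
    have hKy : (0:ℝ) < K * (lam k).im := mul_pos hK hyk
    have hstep : ∀ n ∈ T, 4 * (lam n).im / (K * (lam k).im) ≤ 1 - b n k ^ 2 := by
      intro n hn
      rw [hident n k]
      have hyn : 0 < (lam n).im := h_up n
      have h1 : 4 * (lam n).im / (K * (lam k).im) = 4 * (lam n).im * (lam k).im / (K * (lam k).im ^ 2) := by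
        rw [div_eq_div_iff hKy.ne' (by nlinarith : (0:ℝ) < K * (lam k).im ^ 2).ne']
        ring
      rw [h1]
      apply div_le_div_of_nonneg_left _ (hnsq_pos n k) (hT n hn)
      nlinarith
    have hsum : ∑ n ∈ T, 4 * (lam n).im / (K * (lam k).im) ≤ 2 * L :=
      le_trans (Finset.sum_le_sum hstep) (lemA k T hk)
    have hsum2 : 4 * (∑ n ∈ T, (lam n).im) / (K * (lam k).im) ≤ 2 * L := by
      rw [Finset.mul_sum, Finset.sum_div]
      exact hsum
    rw [div_le_iff₀ hKy] at hsum2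
    nlinarith [hsum2]
  -- the constant
  set C : ℝ := 1 + 27 * L with hCdef
  clear_value C
  have hC : 0 < C := by rw [hCdef]; linarith
  -- main finite claim, by strong induction on the cardinality
  have main : ∀ N : ℕ, ∀ F : Finset ℕ, F.card ≤ N → ∀ (x h : ℝ), 0 < h →
      ∑ n ∈ F, (if (lam n).re ∈ Set.Icc x (x + h) ∧ (lam n).im ∈ Set.Icc 0 h
        then (lam n).im else 0) ≤ C * h := by
    intro N
    induction N with
    | zero =>
      intro F hF x h hh
      rw [Nat.le_zero, Finset.card_eq_zero] at hF
      subst hF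
      simp only [Finset.sum_empty]
      positivity
    | succ N ih =>
      intro F hF x h hh
      rw [← Finset.sum_filter]
      set G := F.filter (fun n => (lam n).re ∈ Set.Icc x (x + h) ∧ (lam n).im ∈ Set.Icc 0 h)
        with hGdef
      rcases G.eq_empty_or_nonempty with hGe | hGne
      · rw [hGe]
        simp only [Finset.sum_empty]
        positivity
      · obtain ⟨k, hkG, hky⟩ := Finset.exists_max_image G (fun n => (lam n).im) hGne
        have hkF : k ∈ F := (Finset.mem_filter.1 hkG).1
        have hkP := (Finset.mem_filter.1 hkG).2
        simp only [Set.mem_Icc] at hkP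
        obtain ⟨⟨hkx1, hkx2⟩, _, hkyh⟩ := hkP
        have hyk : 0 < (lam k).im := h_up k
        have hGmem : ∀ n ∈ G, x ≤ (lam n).re ∧ (lam n).re ≤ x + h ∧ 0 < (lam n).im ∧ (lam n).im ≤ (lam k).im := by
          intro n hn
          have h2 := (Finset.mem_filter.1 hn).2
          simp only [Set.mem_Icc] at h2
          exact ⟨h2.1.1, h2.1.2, h_up n, hky n hn⟩
        set Mid := G.filter (fun n => |(lam n).re - (lam k).re| ≤ 3 * (lam k).im) with hMiddef
        set Rest := G.filter (fun n => ¬ |(lam n).re - (lam k).re| ≤ 3 * (lam k).im) with hRestdef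
        have hsplit : ∑ n ∈ G, (lam n).im = ∑ n ∈ Mid, (lam n).im + ∑ n ∈ Rest, (lam n).im :=
          (Finset.sum_filter_add_sum_filter_not G _ (fun n => (lam n).im)).symm
        have hkMid : k ∈ Mid := by
          refine Finset.mem_filter.2 ⟨hkG, ?_⟩
          rw [sub_self, abs_zero]
          nlinarith
        -- the middle strip
        have hMidb : ∑ n ∈ Mid, (lam n).im ≤ (lam k).im + 13 * L * (lam k).im / 2 := by
          rw [← Finset.add_sum_erase Mid (fun n => (lam n).im) hkMid]
          have hBB := lemB k (Mid.erase k) (Finset.notMem_erase k Mid) 13 (by norm_num) ?_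
          · linarith
          · intro n hn
            have hnG : n ∈ G := Finset.mem_of_mem_filter n (Finset.mem_of_mem_erase hn)
            obtain ⟨h1, h2, h3, h4⟩ := hGmem n hnG
            have habs : |(lam n).re - (lam k).re| ≤ 3 * (lam k).im :=
              (Finset.mem_filter.1 (Finset.mem_of_mem_erase hn)).2
            rw [abs_le] at habs
            have hns : Complex.normSq (lam n - (starRingEnd ℂ) (lam k)) =
                ((lam n).re - (lam k).re) ^ 2 + ((lam n).im + (lam k).im) ^ 2 := by
              simp only [Complex.normSq_apply, Complex.sub_re, Complex.sub_im,
                Complex.conj_re, Complex.conj_im]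
              ring
            rw [hns]
            nlinarith [habs.1, habs.2]
        -- the two side regions
        set Lft := Rest.filter (fun n => (lam n).re < (lam k).re) with hLftdef
        set Rgt := Rest.filter (fun n => ¬ (lam n).re < (lam k).re) with hRgtdef
        have hsplit2 : ∑ n ∈ Rest, (lam n).im = ∑ n ∈ Lft, (lam n).im + ∑ n ∈ Rgt, (lam n).im :=
          (Finset.sum_filter_add_sum_filter_not Rest _ (fun n => (lam n).im)).symm
        have hkRest : k ∉ Rest := by
          intro hk
          refine (Finset.mem_filter.1 hk).2 ?_
          rw [sub_self, abs_zero]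
          nlinarith
        have hcard : ∀ S : Finset ℕ, S ⊆ Rest → S.card ≤ N := by
          intro S hS
          have hSF : S ⊆ F.erase k := by
            intro n hn
            refine Finset.mem_erase.2 ⟨?_, Finset.mem_of_mem_filter n ((hS.trans
              (Finset.filter_subset _ G)) hn)⟩
            rintro rfl
            exact hkRest (hS hn)
          calc S.card ≤ (F.erase k).card := Finset.card_le_card hSF
          _ = F.card - 1 := Finset.card_erase_of_mem hkF
          _ ≤ N := by omega
        have hRestabs : ∀ n ∈ Rest, 3 * (lam k).im < |(lam n).re - (lam k).re| :=
          fun n hn => not_le.1 (Finset.mem_filter.1 hn).2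
        set wL : ℝ := (lam k).re - 3 * (lam k).im - x with hwLdef
        set wR : ℝ := x + h - (lam k).re - 3 * (lam k).im with hwRdef
        have hwLR : wL + wR = h - 6 * (lam k).im := by rw [hwLdef, hwRdef]; ring
        have hwLle : wL ≤ h - 3 * (lam k).im := by rw [hwLdef]; linarith
        have hwRle : wR ≤ h - 3 * (lam k).im := by rw [hwRdef]; linarith
        -- left region
        have hLb : ∑ n ∈ Lft, (lam n).im ≤ C * wL ∨
            (∑ n ∈ Lft, (lam n).im ≤ 10 * L * (lam k).im ∧ wL < (lam k).im) := by
          have hLmem : ∀ n ∈ Lft, n ∈ G ∧ (lam n).re - (lam k).re < -(3 * (lam k).im) := by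
            intro n hn
            have hnRest : n ∈ Rest := Finset.mem_of_mem_filter n hn
            have hlt : (lam n).re < (lam k).re := (Finset.mem_filter.1 hn).2
            have habs := hRestabs n hnRest
            constructor
            · exact Finset.mem_of_mem_filter n hnRest
            · cases abs_cases ((lam n).re - (lam k).re) with
              | inl hc => linarith [hc.2]
              | inr hc => linarith [habs, hc.1]
          by_cases hwL : (lam k).im ≤ wL
          · left
            have heq : ∑ n ∈ Lft, (lam n).im = ∑ n ∈ Lft,
                (if (lam n).re ∈ Set.Icc x (x + wL) ∧ (lam n).im ∈ Set.Icc 0 wL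
                  then (lam n).im else 0) := by
              apply Finset.sum_congr rfl
              intro n hn
              obtain ⟨hnG, hlt⟩ := hLmem n hn
              obtain ⟨h1, h2, h3, h4⟩ := hGmem n hnG
              rw [if_pos]
              constructor
              · rw [Set.mem_Icc]
                constructor
                · exact h1
                · rw [hwLdef]; linarith
              · rw [Set.mem_Icc]
                exact ⟨h3.le, by linarith⟩
            rw [heq]
            exact ih Lft (hcard Lft (Finset.filter_subset _ Rest)) x wL (by linarith)
          · right
            push_neg at hwL
            refine ⟨?_, hwL⟩
            have hBB := lemB k Lft (fun hc => hkRest (Finset.mem_of_mem_filter k hc))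
              20 (by norm_num) ?_
            · linarith
            · intro n hn
              obtain ⟨hnG, hlt⟩ := hLmem n hn
              obtain ⟨h1, h2, h3, h4⟩ := hGmem n hnG
              have hns : Complex.normSq (lam n - (starRingEnd ℂ) (lam k)) =
                  ((lam n).re - (lam k).re) ^ 2 + ((lam n).im + (lam k).im) ^ 2 := by
                simp only [Complex.normSq_apply, Complex.sub_re, Complex.sub_im,
                  Complex.conj_re, Complex.conj_im]
                ring
              rw [hns]
              have hlow : -(4 * (lam k).im) ≤ (lam n).re - (lam k).re := by
                rw [hwLdef] at hwL
                linarith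
              nlinarith
        -- right region
        have hRb : ∑ n ∈ Rgt, (lam n).im ≤ C * wR ∨
            (∑ n ∈ Rgt, (lam n).im ≤ 10 * L * (lam k).im ∧ wR < (lam k).im) := by
          have hRmem : ∀ n ∈ Rgt, n ∈ G ∧ 3 * (lam k).im < (lam n).re - (lam k).re := by
            intro n hn
            have hnRest : n ∈ Rest := Finset.mem_of_mem_filter n hn
            have hge : ¬ (lam n).re < (lam k).re := (Finset.mem_filter.1 hn).2
            push_neg at hge
            have habs := hRestabs n hnRest
            constructor
            · exact Finset.mem_of_mem_filter n hnRest
            · cases abs_cases ((lam n).re - (lam k).re) with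
              | inl hc => linarith [habs, hc.1]
              | inr hc => linarith [hc.2, hge]
          by_cases hwR : (lam k).im ≤ wR
          · left
            have heq : ∑ n ∈ Rgt, (lam n).im = ∑ n ∈ Rgt,
                (if (lam n).re ∈ Set.Icc ((lam k).re + 3 * (lam k).im)
                    ((lam k).re + 3 * (lam k).im + wR) ∧ (lam n).im ∈ Set.Icc 0 wR
                  then (lam n).im else 0) := by
              apply Finset.sum_congr rfl
              intro n hn
              obtain ⟨hnG, hlt⟩ := hRmem n hn
              obtain ⟨h1, h2, h3, h4⟩ := hGmem n hnG
              rw [if_pos]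
              constructor
              · rw [Set.mem_Icc]
                constructor
                · linarith
                · rw [hwRdef]; linarith
              · rw [Set.mem_Icc]
                exact ⟨h3.le, by linarith⟩
            rw [heq]
            exact ih Rgt (hcard Rgt (Finset.filter_subset _ Rest))
              ((lam k).re + 3 * (lam k).im) wR (by linarith)
          · right
            push_neg at hwR
            refine ⟨?_, hwR⟩
            have hBB := lemB k Rgt (fun hc => hkRest (Finset.mem_of_mem_filter k hc))
              20 (by norm_num) ?_
            · linarith
            · intro n hn
              obtain ⟨hnG, hlt⟩ := hRmem n hn
              obtain ⟨h1, h2, h3, h4⟩ := hGmem n hnG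
              have hns : Complex.normSq (lam n - (starRingEnd ℂ) (lam k)) =
                  ((lam n).re - (lam k).re) ^ 2 + ((lam n).im + (lam k).im) ^ 2 := by
                simp only [Complex.normSq_apply, Complex.sub_re, Complex.sub_im,
                  Complex.conj_re, Complex.conj_im]
                ring
              rw [hns]
              have hup : (lam n).re - (lam k).re ≤ 4 * (lam k).im := by
                rw [hwRdef] at hwR
                linarith
              nlinarith
        -- assemble
        rw [hsplit, hsplit2]
        have hLyk : 0 ≤ L * (lam k).im := mul_nonneg hL hyk.le
        have hLh : L * (lam k).im ≤ L * h := mul_le_mul_of_nonneg_left hkyh hL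
        have eCy : C * (lam k).im = (lam k).im + 27 * (L * (lam k).im) := by rw [hCdef]; ring
        have eCh : C * h = h + 27 * (L * h) := by rw [hCdef]; ring
        have hLh0 : 0 ≤ L * h := le_trans hLyk hLh
        rcases hLb with hLb | ⟨hLb, hwLsm⟩ <;> rcases hRb with hRb | ⟨hRb, hwRsm⟩
        · -- both squares
          have e1 : C * wL + C * wR = C * h - 6 * (C * (lam k).im) := by
            rw [← mul_add, hwLR]
            ring
          linarith only [hMidb, hLb, hRb, e1, eCy, hLyk, hyk]
        · -- left square, right small
          have e2 : C * wL ≤ C * (h - 3 * (lam k).im) := mul_le_mul_of_nonneg_left hwLle hC.le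
          have e3 : C * (h - 3 * (lam k).im) = C * h - 3 * (C * (lam k).im) := by ring
          linarith only [hMidb, hLb, hRb, e2, e3, eCy, hLyk, hyk]
        · -- left small, right square
          have e2 : C * wR ≤ C * (h - 3 * (lam k).im) := mul_le_mul_of_nonneg_left hwRle hC.le
          have e3 : C * (h - 3 * (lam k).im) = C * h - 3 * (C * (lam k).im) := by ring
          linarith only [hMidb, hLb, hRb, e2, e3, eCy, hLyk, hyk]
        · -- both small
          linarith only [hMidb, hLb, hRb, eCh, hLh, hkyh, hLyk, hLh0, hyk]
  -- conclude
  refine ⟨C, hC, ?_⟩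
  intro x h hh
  have hpt : ∀ n : ℕ,
      (if (lam n).re ∈ Set.Icc x (x + h) ∧ (lam n).im ∈ Set.Icc 0 h
        then ENNReal.ofReal ((lam n).im) else 0) =
      ENNReal.ofReal (if (lam n).re ∈ Set.Icc x (x + h) ∧ (lam n).im ∈ Set.Icc 0 h
        then (lam n).im else 0) := by
    intro n
    split_ifs
    · rfl
    · simp
  rw [tsum_congr hpt, ENNReal.tsum_eq_iSup_sum]
  apply iSup_le
  intro s
  rw [← ENNReal.ofReal_sum_of_nonneg]
  · exact ENNReal.ofReal_le_ofReal (main s.card s le_rfl x h hh)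
  · intro n _
    split_ifs
    · exact (h_up n).le
    · exact le_rfl
end
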